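/- In the game G, if (θ'_A, θ'_D) is a pure strategy Nash equilibrium, then θ_C(θ'_A, θ'_D) = θ*_A; that is, at any pure strategy Nash equilibrium the aggregate vector equals the majority's true preference vector, so the majority prevails on 100% of disputed cases. -/

import Mathlib

open Real

/-- The aggregate vector `(α θ_D + (1−α) θ_A)/‖α θ_D + (1−α) θ_A‖`. -/
noncomputable def aggregate (α : ℝ) (θA θD : EuclideanSpace ℝ (Fin 2)) :
    EuclideanSpace ℝ (Fin 2) :=
  (‖α • θD + (1 - α) • θA‖)⁻¹ • (α • θD + (1 - α) • θA)

/-- `(θA', θD')` is a pure strategy Nash equilibrium of the game `G` with minority share `α`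
and true preference vectors `θAstar`, `θDstar`: both strategies are unit vectors, and each is
a best response (payoffs are inner products of the aggregate with the true vectors). -/
def IsNashEq (α : ℝ) (θAstar θDstar θA' θD' : EuclideanSpace ℝ (Fin 2)) : Prop :=
  ‖θA'‖ = 1 ∧ ‖θD'‖ = 1 ∧
  (∀ θA : EuclideanSpace ℝ (Fin 2), ‖θA‖ = 1 →
    (inner ℝ (aggregate α θA θD') θAstar : ℝ) ≤ (inner ℝ (aggregate α θA' θD') θAstar : ℝ)) ∧
  (∀ θD : EuclideanSpace ℝ (Fin 2), ‖θD‖ = 1 →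
    (inner ℝ (aggregate α θA' θD) θDstar : ℝ) ≤ (inner ℝ (aggregate α θA' θD') θDstar : ℝ))

/-- Lemma 3: at any pure strategy Nash equilibrium the aggregate equals the majority's true
preference vector. -/
theorem stmt_8 (α : ℝ) (hα : 0 < α) (hα' : α < 1 / 2)
    (θAstar θDstar : EuclideanSpace ℝ (Fin 2))
    (hAs : ‖θAstar‖ = 1) (hDs : ‖θDstar‖ = 1) (hne : θAstar ≠ θDstar)
    (θA' θD' : EuclideanSpace ℝ (Fin 2))
    (hNash : IsNashEq α θAstar θDstar θA' θD') :
    aggregate α θA' θD' = θAstar := by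
  obtain ⟨hA1, hD1, hbestA, -⟩ := hNash
  have hα1 : (0:ℝ) < 1 - α := by linarith
  -- the denominator is positive, so the aggregate is a unit vector
  have hnv : 1 - 2*α ≤ ‖α • θD' + (1 - α) • θA'‖ := by
    have h := norm_sub_norm_le ((1-α) • θA') (-(α • θD'))
    have he : (1-α) • θA' - -(α • θD') = α • θD' + (1 - α) • θA' := by abel
    rw [he, norm_smul, norm_neg, norm_smul, hA1, hD1,
      Real.norm_of_nonneg hα1.le, Real.norm_of_nonneg hα.le] at h
    linarith
  have hvpos : (0:ℝ) < ‖α • θD' + (1 - α) • θA'‖ := by linarith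
  have hagg : ‖aggregate α θA' θD'‖ = 1 := by
    rw [aggregate, norm_smul, norm_inv, norm_norm, inv_mul_cancel₀ hvpos.ne']
  -- find t > 0 with ‖t • θAstar - α • θD'‖ = 1 - α
  have hcont : Continuous fun t : ℝ => ‖t • θAstar - α • θD'‖ :=
    ((continuous_id.smul continuous_const).sub continuous_const).norm
  have hf0 : ‖(0:ℝ) • θAstar - α • θD'‖ = α := by
    rw [zero_smul, zero_sub, norm_neg, norm_smul, hD1, Real.norm_of_nonneg hα.le, mul_one]
  have hf2 : 1 - α ≤ ‖(2:ℝ) • θAstar - α • θD'‖ := by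
    have h := norm_sub_norm_le ((2:ℝ) • θAstar) (α • θD')
    rw [norm_smul, norm_smul, hAs, hD1, Real.norm_of_nonneg hα.le,
      Real.norm_two] at h
    linarith
  obtain ⟨t, ht, hft⟩ :=
    intermediate_value_Icc (by norm_num : (0:ℝ) ≤ 2) hcont.continuousOn
      (Set.mem_Icc.mpr ⟨by rw [hf0]; linarith, hf2⟩)
  have hft' : ‖t • θAstar - α • θD'‖ = 1 - α := hft
  have htpos : 0 < t := by
    rcases ht.1.lt_or_eq with h | h
    · exact h
    · exfalso
      rw [← h, hf0] at hft'
      linarith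
  set θA : EuclideanSpace ℝ (Fin 2) := (1-α)⁻¹ • (t • θAstar - α • θD') with hθA
  have hθA1 : ‖θA‖ = 1 := by
    rw [hθA, norm_smul, hft', norm_inv, Real.norm_of_nonneg hα1.le,
      inv_mul_cancel₀ hα1.ne']
  have hsum : α • θD' + (1 - α) • θA = t • θAstar := by
    rw [hθA, smul_inv_smul₀ hα1.ne']
    abel
  have haggA : aggregate α θA θD' = θAstar := by
    rw [aggregate, hsum, norm_smul, hAs, Real.norm_of_nonneg htpos.le, mul_one,
      inv_smul_smul₀ htpos.ne']
  have h1 : (1:ℝ) ≤ inner ℝ (aggregate α θA' θD') θAstar := by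
    have := hbestA θA hθA1
    rw [haggA, real_inner_self_eq_norm_sq, hAs] at this
    linarith
  have h2 : (inner ℝ (aggregate α θA' θD') θAstar : ℝ) ≤ 1 := by
    have := real_inner_le_norm (aggregate α θA' θD') θAstar
    rw [hagg, hAs] at this
    linarith
  exact (inner_eq_one_iff_of_norm_eq_one hagg hAs).mp (le_antisymm h2 h1)
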